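/- arXiv:1008.4789 — 3 statements merged into one kernel-verified Lean document; each statement's English description precedes it below -/
import Mathlib

section
/- Let {ω_i} for i = 0,…,r-1 be functions on [0,1], J a skew-symmetric 2m×2m matrix, and H : ℝ^{2m} → ℝ continuously differentiable. Suppose ω : [0,1] → ℝ^{2m} is a differentiable curve with ω(0) = y₀ whose derivative is ω'(t) = Σ_{i=0}^{r-1} γ_i ω_i(t), where the vectors γ_i satisfy γ_i = η_i ∫₀¹ ω_i(t) J ∇H(ω(t)) dt with scalars η_i > 0. Then H(ω(1)) = H(y₀). -/
open MeasureTheory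

lemma my_smul_intble {E : Type*} [NormedAddCommGroup E] [NormedSpace ℝ E]
    {f : ℝ → ℝ} {g : ℝ → E} {a b : ℝ}
    (hf : IntervalIntegrable f volume a b) (hg : ContinuousOn g (Set.uIcc a b)) :
    IntervalIntegrable (fun x => f x • g x) volume a b := by
  rw [intervalIntegrable_iff'] at hf ⊢
  exact hf.smul_continuousOn hg isCompact_uIcc

lemma my_skew {n : ℕ} (J : Matrix (Fin n) (Fin n) ℝ) (hJ : J.transpose = -J)
    (v : EuclideanSpace ℝ (Fin n)) :
    (inner ℝ v (Matrix.toEuclideanLin J v) : ℝ) = 0 := by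
  have h : (inner ℝ v (Matrix.toEuclideanLin J v) : ℝ)
      = dotProduct (WithLp.equiv 2 _ v) (J.mulVec (WithLp.equiv 2 _ v)) := by
    simp [PiLp.inner_apply, dotProduct, Matrix.toEuclideanLin_apply, RCLike.inner_apply, mul_comm]
  rw [h]
  set w : Fin n → ℝ := WithLp.equiv 2 _ v
  have h1 : dotProduct w (J.mulVec w) = dotProduct (Matrix.vecMul w J) w :=
    Matrix.dotProduct_mulVec w J w
  have h2 : Matrix.vecMul w J = (J.transpose).mulVec w := (Matrix.mulVec_transpose J w).symm
  rw [h2, hJ] at h1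
  have h3 : dotProduct ((-J).mulVec w) w = - dotProduct w (J.mulVec w) := by
    rw [Matrix.neg_mulVec, neg_dotProduct, dotProduct_comm]
  linarith [h1, h3 ▸ h1]

open MeasureTheory in
theorem stmt_7 (m r : ℕ)
    (J : Matrix (Fin (2 * m)) (Fin (2 * m)) ℝ) (hJ : J.transpose = -J)
    (H : EuclideanSpace ℝ (Fin (2 * m)) → ℝ) (hH : ContDiff ℝ 1 H)
    (ωi : Fin r → ℝ → ℝ)
    (hint : ∀ i, IntervalIntegrable (ωi i) volume 0 1)
    (γ : Fin r → EuclideanSpace ℝ (Fin (2 * m)))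
    (η : Fin r → ℝ) (hη : ∀ i, 0 < η i)
    (y₀ : EuclideanSpace ℝ (Fin (2 * m)))
    (ω : ℝ → EuclideanSpace ℝ (Fin (2 * m)))
    (hω0 : ω 0 = y₀)
    (hω' : ∀ t : ℝ, HasDerivAt ω (∑ i, ωi i t • γ i) t)
    (hγ : ∀ i, γ i =
      η i • ∫ t in (0:ℝ)..1, ωi i t • (Matrix.toEuclideanLin J (gradient H (ω t)))) :
    H (ω 1) = H y₀ := by
  have hHd : Differentiable ℝ H := hH.differentiable one_ne_zero
  have hωc : Continuous ω := continuous_iff_continuousAt.2 fun t => (hω' t).continuousAt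
  have hgradc : Continuous (fun x => gradient H x) :=
    (InnerProductSpace.toDual ℝ _).symm.continuous.comp (hH.continuous_fderiv one_ne_zero)
  set g : ℝ → EuclideanSpace ℝ (Fin (2 * m)) := fun t => gradient H (ω t) with hgdef
  have hgc : Continuous g := hgradc.comp hωc
  have key : ∀ t, HasDerivAt (fun s => H (ω s))
      (∑ i, ωi i t * (inner ℝ (γ i) (g t) : ℝ)) t := by
    intro t
    have h1 : HasFDerivAt H (InnerProductSpace.toDual ℝ _ (g t)) (ω t) :=
      ((hHd (ω t)).hasGradientAt).hasFDerivAt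
    have h2 := h1.comp_hasDerivAt t (hω' t)
    refine h2.congr_deriv (Eq.symm ?_)
    rw [InnerProductSpace.toDual_apply_apply, inner_sum]
    exact Finset.sum_congr rfl fun i _ => by
      rw [real_inner_smul_right, real_inner_comm]
  have hib : ∀ i, IntervalIntegrable
      (fun t => ωi i t * (inner ℝ (γ i) (g t) : ℝ)) volume 0 1 := fun i =>
    (hint i).mul_continuousOn ((continuous_const.inner hgc).continuousOn)
  have hibs : IntervalIntegrable
      (fun t => ∑ i, ωi i t * (inner ℝ (γ i) (g t) : ℝ)) volume 0 1 := by
    have := IntervalIntegrable.sum Finset.univ (fun i _ => hib i)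
    simpa [Finset.sum_fn] using this
  have hft : ∫ t in (0:ℝ)..1, (∑ i, ωi i t * (inner ℝ (γ i) (g t) : ℝ))
      = H (ω 1) - H (ω 0) :=
    intervalIntegral.integral_eq_sub_of_hasDerivAt (fun t _ => key t) hibs
  have hswap : ∫ t in (0:ℝ)..1, (∑ i, ωi i t * (inner ℝ (γ i) (g t) : ℝ))
      = ∑ i, ∫ t in (0:ℝ)..1, ωi i t * (inner ℝ (γ i) (g t) : ℝ) :=
    intervalIntegral.integral_finset_sum (fun i _ => hib i)
  have hsmul_int : ∀ i, IntervalIntegrable (fun t => ωi i t • g t) volume 0 1 :=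
    fun i => my_smul_intble (hint i) hgc.continuousOn
  set v : Fin r → EuclideanSpace ℝ (Fin (2 * m)) :=
    fun i => ∫ t in (0:ℝ)..1, ωi i t • g t with hvdef
  have hvi : ∀ i, (∫ t in (0:ℝ)..1, ωi i t * (inner ℝ (γ i) (g t) : ℝ))
      = (inner ℝ (γ i) (v i) : ℝ) := by
    intro i
    have h := (innerSL ℝ (γ i)).intervalIntegral_comp_comm (hsmul_int i)
    simpa [real_inner_smul_right] using h
  set A := LinearMap.toContinuousLinearMap (Matrix.toEuclideanLin J) with hAdef
  have hγ' : ∀ i, γ i = η i • A (v i) := by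
    intro i
    rw [hγ i]
    congr 1
    have h := A.intervalIntegral_comp_comm (hsmul_int i)
    rw [← h]
    refine intervalIntegral.integral_congr fun t _ => ?_
    simp [hAdef, _root_.map_smul, hgdef]
  have hzero : (∑ i, (inner ℝ (γ i) (v i) : ℝ)) = 0 := by
    refine Finset.sum_eq_zero fun i _ => ?_
    rw [hγ' i, real_inner_smul_left, real_inner_comm]
    have h0 := my_skew J hJ (v i)
    rw [show (A (v i)) = Matrix.toEuclideanLin J (v i) from rfl, h0, mul_zero]
  rw [← hω0]
  have : H (ω 1) - H (ω 0) = 0 := by rw [← hft, hswap]; simp only [hvi]; exact hzero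
  linarith
end

section
/- If g : ℝ → ℝ is analytic (or sufficiently smooth) and P_j is the j-th shifted Legendre polynomial, then ∫₀¹ P_j(τ) g(τh) dτ = O(hʲ) as h → 0; that is, there exist C > 0 and δ > 0 with |∫₀¹ P_j(τ) g(τh) dτ| ≤ C |h|ʲ for |h| ≤ δ. -/
open Polynomial

/-- Shifted Legendre polynomials via the Rodrigues formula. -/
noncomputable def shiftedLegendre (i : ℕ) : Polynomial ℝ :=
  ((Nat.factorial i : ℝ)⁻¹) • derivative^[i] ((X ^ 2 - X) ^ i)

lemma vanish_aux (j i : ℕ) (hij : i < j) (a : ℝ) (ha : a = 0 ∨ a = 1) :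
    Polynomial.eval a (derivative^[i] ((X ^ 2 - X : ℝ[X]) ^ j)) = 0 := by
  have hne : ((X ^ 2 - X : ℝ[X]) ^ j) ≠ 0 := by
    apply pow_ne_zero
    intro hcontra
    have := congrArg (Polynomial.eval (2:ℝ)) hcontra
    norm_num at this
  apply Polynomial.isRoot_iterate_derivative_of_lt_rootMultiplicity
  refine lt_of_lt_of_le hij ?_
  rw [Polynomial.le_rootMultiplicity_iff hne]
  have hfac : (X ^ 2 - X : ℝ[X]) = (X - C 0) * (X - C 1) := by
    simp only [map_zero, map_one, sub_zero]
    ring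
  rcases ha with rfl | rfl
  · rw [hfac, mul_pow]; exact Dvd.intro _ rfl
  · rw [hfac, mul_pow]; exact Dvd.intro_left _ rfl

lemma ibp_zero (m : ℕ) : ∀ (f q : ℝ[X]),
    (∀ i < m, Polynomial.eval (0:ℝ) (derivative^[i] f) = 0 ∧
        Polynomial.eval (1:ℝ) (derivative^[i] f) = 0) →
    derivative^[m] q = 0 →
    (∫ τ in (0:ℝ)..1, Polynomial.eval τ q * Polynomial.eval τ (derivative^[m] f)) = 0 := by
  induction m with
  | zero =>
    intro f q _ hq
    simp only [Function.iterate_zero, id] at hq ⊢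
    simp [hq]
  | succ m ih =>
    intro f q hvan hq
    have key : (∫ τ in (0:ℝ)..1, Polynomial.eval τ q * Polynomial.eval τ (derivative^[m+1] f))
        = Polynomial.eval 1 q * Polynomial.eval 1 (derivative^[m] f)
          - Polynomial.eval 0 q * Polynomial.eval 0 (derivative^[m] f)
          - ∫ τ in (0:ℝ)..1,
              Polynomial.eval τ (derivative q) * Polynomial.eval τ (derivative^[m] f) := by
      have hiter : derivative^[m+1] f = derivative (derivative^[m] f) :=
        Function.iterate_succ_apply' _ _ _
      rw [hiter]
      exact intervalIntegral.integral_mul_deriv_eq_deriv_mul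
        (fun x _ => Polynomial.hasDerivAt q x)
        (fun x _ => Polynomial.hasDerivAt (derivative^[m] f) x)
        ((Polynomial.continuous _).intervalIntegrable _ _)
        ((Polynomial.continuous _).intervalIntegrable _ _)
    have hb0 := (hvan m (Nat.lt_succ_self m)).1
    have hb1 := (hvan m (Nat.lt_succ_self m)).2
    rw [key, hb0, hb1, mul_zero, mul_zero, sub_zero, zero_sub, neg_eq_zero]
    exact ih f (derivative q) (fun i hi => hvan i (hi.trans (Nat.lt_succ_self m)))
      (by rw [← Function.iterate_succ_apply]; exact hq)

lemma leg_orth (j k : ℕ) (hk : k < j) :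
    (∫ τ in (0:ℝ)..1, Polynomial.eval τ (shiftedLegendre j) * τ ^ k) = 0 := by
  have h0 := ibp_zero j ((X ^ 2 - X : ℝ[X]) ^ j) (X ^ k)
    (fun i hi => ⟨vanish_aux j i hi 0 (Or.inl rfl), vanish_aux j i hi 1 (Or.inr rfl)⟩)
    (Polynomial.iterate_derivative_eq_zero (by simpa using hk))
  have heq : ∀ τ : ℝ, Polynomial.eval τ (shiftedLegendre j) * τ ^ k
      = ((Nat.factorial j : ℝ)⁻¹) * (Polynomial.eval τ (X ^ k : ℝ[X]) *
          Polynomial.eval τ (derivative^[j] ((X ^ 2 - X) ^ j))) := by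
    intro τ
    simp [_root_.shiftedLegendre]
    ring
  simp_rw [heq]
  rw [intervalIntegral.integral_const_mul, h0, mul_zero]

theorem stmt_12 (j : ℕ) (g : ℝ → ℝ) (hg : ∀ x : ℝ, AnalyticAt ℝ g x) :
    ∃ C > (0 : ℝ), ∃ δ > (0 : ℝ), ∀ h : ℝ, |h| ≤ δ →
      |∫ τ in (0:ℝ)..1, (_root_.shiftedLegendre j).eval τ * g (τ * h)| ≤ C * |h| ^ j := by
  obtain ⟨p, hp⟩ := hg 0
  have hgc : Continuous g := continuous_iff_continuousAt.mpr fun x => (hg x).continuousAt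
  have hO := hp.isBigO_sub_partialSum_pow j
  rw [Asymptotics.isBigO_iff] at hO
  obtain ⟨c, hc⟩ := hO
  rw [Metric.eventually_nhds_iff] at hc
  obtain ⟨ε, hε, hb⟩ := hc
  set c' : ℝ := max c 0 with hc'def
  have hc'0 : 0 ≤ c' := le_max_right _ _
  have hrem : ∀ y : ℝ, |y| < ε → |g y - p.partialSum j y| ≤ c' * |y| ^ j := by
    intro y hy
    have h1 := hb (y := y) (by simpa [Real.dist_eq] using hy)
    simp only [zero_add, Real.norm_eq_abs, abs_pow, abs_abs] at h1
    calc |g y - p.partialSum j y| ≤ c * |y| ^ j := h1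
      _ ≤ c' * |y| ^ j := mul_le_mul_of_nonneg_right (le_max_left _ _) (by positivity)
  obtain ⟨M, hM⟩ := (isCompact_Icc (a := (0:ℝ)) (b := 1)).exists_bound_of_continuousOn
    ((_root_.shiftedLegendre j).continuous.continuousOn)
  have hM0 : 0 ≤ M := le_trans (norm_nonneg _) (hM 0 ⟨le_refl _, zero_le_one⟩)
  have hS : ∀ h : ℝ,
      (∫ τ in (0:ℝ)..1, Polynomial.eval τ (shiftedLegendre j) * p.partialSum j (τ * h)) = 0 := by
    intro h
    have heq : ∀ τ : ℝ, Polynomial.eval τ (shiftedLegendre j) * p.partialSum j (τ * h)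
        = ∑ k ∈ Finset.range j,
            (h ^ k * p.coeff k) * (Polynomial.eval τ (shiftedLegendre j) * τ ^ k) := by
      intro τ
      rw [FormalMultilinearSeries.partialSum, Finset.mul_sum]
      refine Finset.sum_congr rfl fun k _ => ?_
      rw [p.apply_eq_pow_smul_coeff, smul_eq_mul, mul_pow]
      ring
    simp_rw [heq]
    rw [intervalIntegral.integral_finset_sum]
    · exact Finset.sum_eq_zero fun k hk => by
        rw [intervalIntegral.integral_const_mul, leg_orth j k (Finset.mem_range.mp hk), mul_zero]
    · intro k _
      exact (continuous_const.mul
        ((_root_.shiftedLegendre j).continuous.mul (continuous_pow k))).intervalIntegrable _ _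
  refine ⟨M * c' + 1, by positivity, ε / 2, by positivity, fun h hh => ?_⟩
  have hScont : Continuous fun τ : ℝ => p.partialSum j (τ * h) :=
    (p.partialSum_continuous j).comp (continuous_id.mul continuous_const)
  have hint1 : IntervalIntegrable
      (fun τ : ℝ => Polynomial.eval τ (shiftedLegendre j) * p.partialSum j (τ * h))
      MeasureTheory.volume 0 1 :=
    ((_root_.shiftedLegendre j).continuous.mul hScont).intervalIntegrable _ _
  have hint2 : IntervalIntegrable
      (fun τ : ℝ => Polynomial.eval τ (shiftedLegendre j) *
        (g (τ * h) - p.partialSum j (τ * h))) MeasureTheory.volume 0 1 :=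
    ((_root_.shiftedLegendre j).continuous.mul
      ((hgc.comp (continuous_id.mul continuous_const)).sub hScont)).intervalIntegrable _ _
  have hsplit : (∫ τ in (0:ℝ)..1, Polynomial.eval τ (shiftedLegendre j) * g (τ * h))
      = (∫ τ in (0:ℝ)..1, Polynomial.eval τ (shiftedLegendre j) * p.partialSum j (τ * h))
        + ∫ τ in (0:ℝ)..1, Polynomial.eval τ (shiftedLegendre j) *
            (g (τ * h) - p.partialSum j (τ * h)) := by
    rw [← intervalIntegral.integral_add hint1 hint2]
    apply intervalIntegral.integral_congr
    intro τ _
    ring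
  rw [hsplit, hS h, zero_add]
  have hbound : ∀ x ∈ Set.uIoc (0:ℝ) 1,
      ‖Polynomial.eval x (shiftedLegendre j) * (g (x * h) - p.partialSum j (x * h))‖
        ≤ M * (c' * |h| ^ j) := by
    intro x hx
    rw [Set.uIoc_of_le zero_le_one] at hx
    have hx0 : 0 ≤ x := le_of_lt hx.1
    have hx1 : x ≤ 1 := hx.2
    have hxh : |x * h| ≤ |h| := by
      rw [abs_mul]
      exact mul_le_of_le_one_left (abs_nonneg _) (by rw [abs_of_nonneg hx0]; exact hx1)
    have hxhε : |x * h| < ε := lt_of_le_of_lt (hxh.trans hh) (by linarith)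
    rw [Real.norm_eq_abs, abs_mul]
    refine mul_le_mul ?_ ?_ (abs_nonneg _) hM0
    · simpa [Real.norm_eq_abs] using hM x ⟨hx0, hx1⟩
    · calc |g (x * h) - p.partialSum j (x * h)| ≤ c' * |x * h| ^ j := hrem _ hxhε
        _ ≤ c' * |h| ^ j :=
          mul_le_mul_of_nonneg_left (pow_le_pow_left₀ (abs_nonneg _) hxh j) hc'0
  have hfin := intervalIntegral.norm_integral_le_of_norm_le_const hbound
  simp only [Real.norm_eq_abs, sub_zero, abs_one, mul_one] at hfin
  calc |∫ τ in (0:ℝ)..1, Polynomial.eval τ (shiftedLegendre j) *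
        (g (τ * h) - p.partialSum j (τ * h))| ≤ M * (c' * |h| ^ j) := hfin
    _ ≤ (M * c' + 1) * |h| ^ j := by nlinarith [pow_nonneg (abs_nonneg h) j]
end

section
/- For the harmonic oscillator y' = Jy with J = [[0,1],[-1,0]], the degree-3 polynomial curve ω defined by ω(t) = y₀ + [(60P_1(t) + 59P_0(t) - P_3(t))I + 10(P_2(t) - P_0(t))J] S y₀ with S = (1/(4·54² + 59²))(-59 I + 2·54 J) has residual R(t) = ω'(t) - Jω(t) = P_3(t) J S y₀; in particular, the residual vanishes exactly at the roots of the shifted Legendre polynomial P_3. -/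
open Polynomial Matrix

private lemma sL0 (t : ℝ) : (_root_.shiftedLegendre 0).eval t = 1 := by
  simp [_root_.shiftedLegendre]

private lemma sL1 (t : ℝ) : (_root_.shiftedLegendre 1).eval t = 2*t - 1 := by
  simp [_root_.shiftedLegendre, Function.iterate_succ_apply', derivative_pow, derivative_mul,
    derivative_sub, Nat.factorial]

private lemma sL2 (t : ℝ) : (_root_.shiftedLegendre 2).eval t = 6*t^2 - 6*t + 1 := by
  simp [_root_.shiftedLegendre, Function.iterate_succ_apply', derivative_pow, derivative_mul,
    derivative_sub, Nat.factorial]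
  ring

private lemma sL3 (t : ℝ) : (_root_.shiftedLegendre 3).eval t = 20*t^3 - 30*t^2 + 12*t - 1 := by
  simp [_root_.shiftedLegendre, Function.iterate_succ_apply', derivative_pow, derivative_mul,
    derivative_sub, Nat.factorial]
  ring

theorem stmt_14 (y₀ : Fin 2 → ℝ) (J S : Matrix (Fin 2) (Fin 2) ℝ)
    (hJ : J = !![0, 1; -1, 0])
    (hS : S = (1 / (4 * 54 ^ 2 + 59 ^ 2) : ℝ) •
      ((-59 : ℝ) • (1 : Matrix (Fin 2) (Fin 2) ℝ) + (108 : ℝ) • J))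
    (ω : ℝ → Fin 2 → ℝ)
    (hω : ∀ t : ℝ, ω t = y₀ +
      Matrix.mulVec
        ((60 * (_root_.shiftedLegendre 1).eval t + 59 * (_root_.shiftedLegendre 0).eval t
            - (_root_.shiftedLegendre 3).eval t) • (1 : Matrix (Fin 2) (Fin 2) ℝ)
          + (10 * ((_root_.shiftedLegendre 2).eval t - (_root_.shiftedLegendre 0).eval t)) • J)
        (S.mulVec y₀)) :
    (∀ t : ℝ, HasDerivAt ω
        (J.mulVec (ω t) + (_root_.shiftedLegendre 3).eval t • J.mulVec (S.mulVec y₀)) t) ∧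
    (∀ t : ℝ, (_root_.shiftedLegendre 3).eval t = 0 → HasDerivAt ω (J.mulVec (ω t)) t) := by
  set v : Fin 2 → ℝ := S.mulVec y₀ with hv
  set w : Fin 2 → ℝ := J.mulVec v with hw
  have hωeq : ω = fun t => y₀ + ((-20*t^3+30*t^2+108*t) • v + (60*t^2-60*t) • w) := by
    funext t
    rw [hω t, sL0, sL1, sL2, sL3, Matrix.add_mulVec, Matrix.smul_mulVec,
      Matrix.smul_mulVec, Matrix.one_mulVec]
    have ha : (60 * (2*t - 1) + 59 * 1 - (20*t^3 - 30*t^2 + 12*t - 1)) =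
        -20*t^3+30*t^2+108*t := by ring
    have hb : (10 * ((6*t^2 - 6*t + 1) - 1)) = 60*t^2-60*t := by ring
    rw [ha, hb, hw, hv]
  have key : ∀ t : ℝ, HasDerivAt ω ((-60*t^2+60*t+108) • v + (120*t-60) • w) t := by
    intro t
    have hp : HasDerivAt (fun t : ℝ => -20*t^3+30*t^2+108*t) (-60*t^2+60*t+108) t := by
      have h1 := (hasDerivAt_pow 3 t).const_mul (-20 : ℝ)
      have h2 := (hasDerivAt_pow 2 t).const_mul (30 : ℝ)
      have h3 := (hasDerivAt_id t).const_mul (108 : ℝ)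
      have := (h1.add h2).add h3
      exact this.congr_deriv (by push_cast; ring)
    have hq : HasDerivAt (fun t : ℝ => 60*t^2-60*t) (120*t-60) t := by
      have h2 := (hasDerivAt_pow 2 t).const_mul (60 : ℝ)
      have h3 := (hasDerivAt_id t).const_mul (60 : ℝ)
      have := h2.sub h3
      exact this.congr_deriv (by push_cast; ring)
    have := ((hp.smul_const v).add (hq.smul_const w)).const_add y₀
    rw [hωeq]
    exact this
  have veq : ∀ t : ℝ,
      ((-60*t^2+60*t+108) • v + (120*t-60) • w) =
        J.mulVec (ω t) + (_root_.shiftedLegendre 3).eval t • w := by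
    intro t
    have hSmat : S = !![-59/15145, 108/15145; -108/15145, -59/15145] := by
      rw [hS, hJ]
      ext i j
      fin_cases i <;> fin_cases j <;> simp [Matrix.one_apply] <;> norm_num
    rw [hωeq, sL3]
    subst hJ
    simp only [hw, hv, hSmat]
    funext i
    fin_cases i <;>
      simp [Matrix.mulVec, dotProduct, Fin.sum_univ_two, Matrix.one_apply,
        Matrix.add_apply, Matrix.smul_apply, Matrix.vecHead, Matrix.vecTail,
        Function.comp] <;> ring
  constructor
  · intro t
    have := key t
    rwa [veq t] at this
  · intro t h0
    have := key t
    rw [veq t, h0, zero_smul, add_zero] at this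
    exact this
end
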